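/- For all partial multifunctions f : ⊆ (X₀,δ_{X₀}) ⇉ (Y₀,δ_{Y₀}), g : ⊆ (X₁,δ_{X₁}) ⇉ (Y₁,δ_{Y₁}), and h : ⊆ (U,δ_U) ⇉ (V,δ_V) on represented spaces, (f ⊓ h) ⊞ (g ⊓ h) ≤_sW (f ⊞ g) ⊓ h. -/

import Mathlib

attribute [local instance] Classical.propDecidable

namespace StrongWeihrauch

noncomputable section

/-! ### Cantor space, monotone approximations, and the evaluation map -/

/-- Cantor space `2^ω`; we identify subsets of `ω` with their characteristic functions. -/
abbrev Cantor : Type := ℕ → Bool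

/-- The coded triple `⟨n,s,i⟩`. -/
def tpl (n s i : ℕ) : ℕ := Nat.pair n (Nat.pair s i)

/-- A monotone approximation (Definition 3.1): every element has the form `⟨n,s,i⟩` with
`i < 2`; for each `n` there is at most one pair `(s,i)` with `⟨n,s,i⟩ ∈ a`; and the stages `s`
are strictly increasing in `n`. -/
def MonotoneApprox (a : Cantor) : Prop :=
  (∀ k, a k = true → ∃ n s i, i < 2 ∧ k = tpl n s i) ∧
  (∀ n s t i j, a (tpl n s i) = true → a (tpl n t j) = true → s = t ∧ i = j) ∧
  (∀ m n s t i j, a (tpl m s i) = true → a (tpl n t j) = true → m < n → s < t)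

/-- A total monotone approximation: every `n` gets a value. -/
def TotalMonotoneApprox (a : Cantor) : Prop :=
  MonotoneApprox a ∧ ∀ n, ∃ s i, i < 2 ∧ a (tpl n s i) = true

/-- The value of the evaluation map `e` on a (total) monotone approximation:
`eVal a n = i` iff `⟨n,s,i⟩ ∈ a` for some `s`. -/
def eVal (a : Cantor) : Cantor := fun n => decide (∃ s, a (tpl n s 1) = true)

/-- The evaluation map `e : ⊆ 2^ω → 2^ω`, the partial function whose domain is the set of
total monotone approximations `a`, with `e(a)(n) = i` iff `⟨n,s,i⟩ ∈ a` for some `s`. -/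
def evalMA : Cantor →. Cantor := fun a => ⟨TotalMonotoneApprox a, fun _ => eVal a⟩

/-! ### Turing functionals -/

/-- The oracle information available at stage `s`: the first `s` bits of `p`. -/
def initSeg (p : Cantor) (s : ℕ) : List Bool := (List.range s).map p

/-- A `{0,1}`-valued Turing functional on Cantor space, presented by a computable monotone
finite-prefix approximation: `approx σ n = some b` means that the computation on input `n`
with oracle prefix `σ` has converged, with output `b`. -/
structure TuringFunctional where
  approx : List Bool → ℕ → Option Bool
  computable : Computable₂ approx
  mono : ∀ σ τ n b, σ <+: τ → approx σ n = some b → approx τ n = some b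

namespace TuringFunctional

/-- `Φ^p(n)[s]↓`. -/
def ConvAt (Φ : TuringFunctional) (p : Cantor) (n s : ℕ) : Prop :=
  (Φ.approx (initSeg p s) n).isSome = true

/-- `s` is least such that `Φ^p(n)[s]↓`. -/
def LeastStage (Φ : TuringFunctional) (p : Cantor) (n s : ℕ) : Prop :=
  Φ.ConvAt p n s ∧ ∀ t, t < s → ¬ Φ.ConvAt p n t

/-- Convention 2.1: if `Φ^p(n)[s]↓` then `Φ^p(m)[s]↓` for all `m < n`, and for each `s`
there is at most one `n` for which `s` is least with `Φ^p(n)[s]↓`. -/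
def Convention (Φ : TuringFunctional) : Prop :=
  (∀ (p : Cantor) (s n m : ℕ), m < n → Φ.ConvAt p n s → Φ.ConvAt p m s) ∧
  (∀ (p : Cantor) (s n n' : ℕ), Φ.LeastStage p n s → Φ.LeastStage p n' s → n = n')

/-- The partial function `⊆ 2^ω → 2^ω` computed by `Φ`; it is defined at `p` exactly when
`Φ(p)` is total, in which case its value is the map `n ↦ Φ^p(n)`. -/
def eval (Φ : TuringFunctional) : Cantor →. Cantor :=
  fun p => ⟨∀ n, ∃ s b, Φ.approx (initSeg p s) n = some b,
    fun h n => (h n).choose_spec.choose⟩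

end TuringFunctional

/-- `a_{Φ(p)}`: the set of all `⟨n,s,i⟩` where `s` is least such that `Φ^p(n)[s]↓ = i`. -/
def approxSeq (Φ : TuringFunctional) (p : Cantor) : Cantor := fun k =>
  decide (∃ n s b, k = tpl n s (Bool.toNat b) ∧ Φ.LeastStage p n s ∧
    Φ.approx (initSeg p s) n = some b)

/-- Turing reducibility `q ≤_T p` on Cantor space. -/
def TuringLe (q p : Cantor) : Prop := ∃ Φ : TuringFunctional, Φ.eval p = Part.some q

/-! ### Pairing on Cantor space -/

/-- The effective join `⟨p,q⟩` on Cantor space. -/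
def pairC (p q : Cantor) : Cantor := fun n => if n % 2 = 0 then p (n / 2) else q (n / 2)

def leftC (r : Cantor) : Cantor := fun n => r (2 * n)

def rightC (r : Cantor) : Cantor := fun n => r (2 * n + 1)

/-- The singleton `{i} ⊆ ω` as an element of Cantor space. -/
def natSet (i : ℕ) : Cantor := fun n => decide (n = i)

/-- `⟨i,p⟩`, i.e. `⟨{i},p⟩`. -/
def inC (i : ℕ) (p : Cantor) : Cantor := pairC (natSet i) p

lemma leftC_pairC (p q : Cantor) : leftC (pairC p q) = p := by
  funext n
  have h1 : 2 * n % 2 = 0 := by omega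
  have h2 : 2 * n / 2 = n := by omega
  simp [leftC, pairC, h1, h2]

lemma rightC_pairC (p q : Cantor) : rightC (pairC p q) = q := by
  funext n
  have h1 : (2 * n + 1) % 2 = 1 := by omega
  have h2 : (2 * n + 1) / 2 = n := by omega
  simp [rightC, pairC, h1, h2]

lemma tpl_inj {n s i n' s' i' : ℕ} (h : tpl n s i = tpl n' s' i') :
    n = n' ∧ s = s' ∧ i = i' := by
  unfold tpl at h
  rw [Nat.pair_eq_pair] at h
  rcases h with ⟨h1, h2⟩
  rw [Nat.pair_eq_pair] at h2
  exact ⟨h1, h2.1, h2.2⟩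

lemma toNat_lt_two (b : Bool) : b.toNat < 2 := by cases b <;> decide

/-- Encoding of `q ∈ 2^ω` as a total monotone approximation evaluating to `q`. -/
def maEncode (q : Cantor) : Cantor := fun k => decide (∃ n, k = tpl n n (q n).toNat)

lemma maEncode_mem {q : Cantor} {k : ℕ} :
    maEncode q k = true ↔ ∃ n, k = tpl n n (q n).toNat := by
  simp [maEncode]

lemma maEncode_total (q : Cantor) : TotalMonotoneApprox (maEncode q) := by
  refine ⟨⟨?_, ?_, ?_⟩, ?_⟩
  · intro k hk
    obtain ⟨n, rfl⟩ := maEncode_mem.mp hk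
    exact ⟨n, n, (q n).toNat, toNat_lt_two _, rfl⟩
  · intro n s t i j h1 h2
    obtain ⟨m, hm⟩ := maEncode_mem.mp h1
    obtain ⟨m', hm'⟩ := maEncode_mem.mp h2
    obtain ⟨e1, e2, e3⟩ := tpl_inj hm
    obtain ⟨f1, f2, f3⟩ := tpl_inj hm'
    have hmm' : m = m' := by omega
    refine ⟨by omega, by rw [e3, f3, hmm']⟩
  · intro m n s t i j h1 h2 hmn
    obtain ⟨u, hu⟩ := maEncode_mem.mp h1
    obtain ⟨v, hv⟩ := maEncode_mem.mp h2
    obtain ⟨e1, e2, _⟩ := tpl_inj hu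
    obtain ⟨f1, f2, _⟩ := tpl_inj hv
    omega
  · intro n
    exact ⟨n, (q n).toNat, toNat_lt_two _, maEncode_mem.mpr ⟨n, rfl⟩⟩

lemma eVal_maEncode (q : Cantor) : eVal (maEncode q) = q := by
  funext n
  have hiff : (∃ s, maEncode q (tpl n s 1) = true) ↔ q n = true := by
    constructor
    · rintro ⟨s, hs⟩
      obtain ⟨m, hm⟩ := maEncode_mem.mp hs
      obtain ⟨e1, e2, e3⟩ := tpl_inj hm
      subst e1
      cases hq : q n
      · rw [hq] at e3; simp at e3
      · rfl
    · intro hq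
      refine ⟨n, maEncode_mem.mpr ⟨n, ?_⟩⟩
      rw [hq]
      rfl
  cases hq : q n
  · have hne : ¬ (∃ s, maEncode q (tpl n s 1) = true) := by
      intro h
      have ht := hiff.mp h
      rw [ht] at hq
      exact Bool.noConfusion hq
    simp [eVal, hne]
  · simp [eVal, hiff.mpr hq]

/-- An explicit non-(monotone approximation). -/
def badMA : Cantor := fun k => decide (k = tpl 0 0 0 ∨ k = tpl 0 1 0)

lemma badMA_not : ¬ TotalMonotoneApprox badMA := by
  rintro ⟨⟨-, h2, -⟩, -⟩
  have ha : badMA (tpl 0 0 0) = true := by simp [badMA]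
  have hb : badMA (tpl 0 1 0) = true := by simp [badMA]
  have := (h2 0 0 1 0 0 ha hb).1
  omega

/-! ### Represented spaces -/

/-- A represented space: a set `X` together with a partial surjection `δ : ⊆ 2^ω → X`. -/
structure RepSp : Type 1 where
  X : Type
  δ : Cantor →. X
  surj : ∀ x : X, ∃ p, x ∈ δ p

namespace RepSp

/-- The product representation of `X₀ × X₁`: `δ(⟨p₀,p₁⟩) = (δ₀(p₀), δ₁(p₁))`. -/
def prod (A B : RepSp) : RepSp where
  X := A.X × B.X
  δ := fun r => (A.δ (leftC r)).bind fun x => (B.δ (rightC r)).map fun y => (x, y)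
  surj := by
    rintro ⟨x, y⟩
    obtain ⟨p, hp⟩ := A.surj x
    obtain ⟨q, hq⟩ := B.surj y
    refine ⟨pairC p q, ?_⟩
    simp only [leftC_pairC, rightC_pairC, Part.mem_bind_iff]
    exact ⟨x, hp, Part.mem_map _ hq⟩

/-- The disjoint-union representation of `X₀ ⊔ X₁`: `δ(⟨i,p⟩) = ⟨i, δᵢ(p)⟩`. -/
def sum (A B : RepSp) : RepSp where
  X := A.X ⊕ B.X
  δ := fun r =>
    if leftC r = natSet 0 then (A.δ (rightC r)).map Sum.inl
    else if leftC r = natSet 1 then (B.δ (rightC r)).map Sum.inr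
    else Part.none
  surj := by
    rintro (x | y)
    · obtain ⟨p, hp⟩ := A.surj x
      refine ⟨inC 0 p, ?_⟩
      have e1 : leftC (inC 0 p) = natSet 0 := leftC_pairC _ _
      have e2 : rightC (inC 0 p) = p := rightC_pairC _ _
      simp only [e1, e2, if_pos rfl]
      exact Part.mem_map _ hp
    · obtain ⟨p, hp⟩ := B.surj y
      refine ⟨inC 1 p, ?_⟩
      have e1 : leftC (inC 1 p) = natSet 1 := leftC_pairC _ _
      have e2 : rightC (inC 1 p) = p := rightC_pairC _ _
      have hne : natSet 1 ≠ natSet 0 := by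
        intro h
        have := congrFun h 0
        simp [natSet] at this
      simp only [e1, e2, hne, if_neg, if_pos rfl, ite_false, ite_true]
      exact Part.mem_map _ hp

/-- The completion `Ŷ = Y ∪ {∞_Y}` (with `∞_Y` rendered as `none`), represented by
`δ_Ŷ(p) = δ_Y(e(p))` if `p` is a total monotone approximation with `e(p) ∈ dom(δ_Y)`, and
`δ_Ŷ(p) = ∞_Y` otherwise. -/
def hat (A : RepSp) : RepSp where
  X := Option A.X
  δ := fun p => Part.some (((evalMA p).bind A.δ).toOption)
  surj := by
    intro y
    match y with
    | none =>
        refine ⟨badMA, ?_⟩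
        rw [Part.mem_some_iff]
        have hd : ¬ ((evalMA badMA).bind A.δ).Dom := by
          rintro ⟨h1, -⟩
          exact badMA_not h1
        rw [eq_comm, Part.toOption_eq_none_iff]
        exact hd
    | some x =>
        obtain ⟨p, hp⟩ := A.surj x
        refine ⟨maEncode p, ?_⟩
        rw [Part.mem_some_iff, eq_comm, Part.toOption_eq_some_iff]
        refine Part.mem_bind_iff.mpr ?_
        refine ⟨p, ?_, hp⟩
        exact ⟨maEncode_total p, eVal_maEncode p⟩

end RepSp

/-! ### Partial multifunctions and the Weihrauch reducibilities -/

/-- A partial multifunction `f : ⊆ X ⇉ Y` between represented spaces: `f.f x` is the set of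
solutions of the instance `x`, and the domain of `f` is the set of `x` with `f.f x ≠ ∅`. -/
structure MFn : Type 1 where
  A : RepSp
  B : RepSp
  f : A.X → Set B.X

namespace MFn

/-- The coproduct `f ⊔ g`. -/
def sqcup (f g : MFn) : MFn where
  A := f.A.sum g.A
  B := f.B.sum g.B
  f := Sum.elim (fun x => Sum.inl '' f.f x) (fun y => Sum.inr '' g.f y)

/-- The meet `f ⊓ g`, with `(f ⊓ g)(⟨x,y⟩) = ({0} × f(x)) ∪ ({1} × g(y))` for
`x ∈ dom f`, `y ∈ dom g`. -/
def sqcap (f g : MFn) : MFn where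
  A := f.A.prod g.A
  B := f.B.sum g.B
  f := fun xy =>
    if (f.f xy.1).Nonempty ∧ (g.f xy.2).Nonempty then
      (Sum.inl '' f.f xy.1) ∪ (Sum.inr '' g.f xy.2)
    else ∅

/-- The join `f ⊞ g : ⊆ X₀ ⊔ X₁ ⇉ Ŷ₀ × Ŷ₁`, with `(f ⊞ g)(⟨0,x⟩) = f(x) × Ŷ₁` and
`(f ⊞ g)(⟨1,x⟩) = Ŷ₀ × g(x)`. -/
def boxplus (f g : MFn) : MFn where
  A := f.A.sum g.A
  B := (f.B.hat).prod (g.B.hat)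
  f := Sum.elim
    (fun x => (Option.some '' f.f x) ×ˢ (Set.univ : Set (Option g.B.X)))
    (fun y => (Set.univ : Set (Option f.B.X)) ×ˢ (Option.some '' g.f y))

end MFn

/-- `F ⊢ f`: the partial function `F : ⊆ 2^ω → 2^ω` is a realizer of `f`, i.e.
`δ_Y F(p) ∈ f δ_X(p)` for every `p ∈ dom(f δ_X)`. -/
def Realizes (F : Cantor →. Cantor) (f : MFn) : Prop :=
  ∀ p x, x ∈ f.A.δ p → (f.f x).Nonempty →
    ∃ q ∈ F p, ∃ y ∈ f.B.δ q, y ∈ f.f x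

/-- Composition of partial functions on Cantor space: `pcomp F G = F ∘ G`. -/
def pcomp (F G : Cantor →. Cantor) : Cantor →. Cantor := fun p => (G p).bind F

/-- Strong Weihrauch reducibility: `f ≤_sW g` iff there are Turing functionals `Φ, Ψ` with
`Ψ G Φ ⊢ f` for every `G ⊢ g`. -/
def sWLe (f g : MFn) : Prop :=
  ∃ Φ Ψ : TuringFunctional, ∀ G : Cantor →. Cantor, Realizes G g →
    Realizes (pcomp Ψ.eval (pcomp G Φ.eval)) f

/-- Strong Weihrauch equivalence. -/
def sWEq (f g : MFn) : Prop := sWLe f g ∧ sWLe g f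

/-- Weihrauch reducibility: `f ≤_W g` iff there are Turing functionals `Φ, Ψ` with
`Ψ⟨id, G Φ⟩ ⊢ f` for every `G ⊢ g`. -/
def wLe (f g : MFn) : Prop :=
  ∃ Φ Ψ : TuringFunctional, ∀ G : Cantor →. Cantor, Realizes G g →
    Realizes (fun p => (pcomp G Φ.eval p).bind fun q => Ψ.eval (pairC p q)) f

/-- Weihrauch equivalence. -/
def wEq (f g : MFn) : Prop := wLe f g ∧ wLe g f

/-- Cantor space as a represented space, with the identity representation. -/
def CantorSp : RepSp where
  X := Cantor
  δ := fun p => Part.some p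
  surj := fun p => ⟨p, Part.mem_some_iff.mpr rfl⟩

/-- A partial multifunction on Cantor space, viewed as a multifunction on represented
spaces via the identity representation. -/
def ofCantor (F : Cantor → Set Cantor) : MFn := ⟨CantorSp, CantorSp, F⟩

/-! ### Further definitions used in the statements -/

/-- `c` is an index for the Turing functional `Ψ`. -/
def codesTF (c : Nat.Partrec.Code) (Ψ : TuringFunctional) : Prop :=
  ∀ (σ : List Bool) (n : ℕ),
    c.eval (Nat.pair (Encodable.encode σ) n) = Part.some (Encodable.encode (Ψ.approx σ n))

/-- The multifunction `h` of Lemma 4.4: `h(⟨0,p⟩)` consists of all pairs `⟨a,q⟩` where `a`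
is a total monotone approximation with `e(a) ∈ F(p)`, and `h(⟨1,p⟩)` of all pairs `⟨q,a⟩`
where `a` is a total monotone approximation with `e(a) ∈ G(p)`. -/
def hJoin (F G : Cantor → Set Cantor) : Cantor → Set Cantor := fun r =>
  {z | leftC r = natSet 0 ∧
    ∃ a q, z = pairC a q ∧ TotalMonotoneApprox a ∧ eVal a ∈ F (rightC r)} ∪
  {z | leftC r = natSet 1 ∧
    ∃ q a, z = pairC q a ∧ TotalMonotoneApprox a ∧ eVal a ∈ G (rightC r)}

/-- A single-valued partial function on Cantor space, viewed as a partial multifunction on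
represented spaces (via the identity representation). -/
def pfnToM (F : Cantor →. Cantor) : MFn := ofCantor fun p => {q | q ∈ F p}

/-- The single-point partial function `{p} → {q}`. -/
def singleFn (p q : Cantor) : MFn := ofCantor fun r => if r = p then {q} else ∅

/-- `A` is Medvedev reducible to `B`. -/
def MedvedevLe (A B : Set Cantor) : Prop :=
  ∃ Φ : TuringFunctional, ∀ p ∈ B, ∃ q ∈ Φ.eval p, q ∈ A

/-- The all-zero sequence `0^ω`. -/
def zeroSeq : Cantor := fun _ => false

/-- `d_A : A → {0^ω}`. -/
def dFn (A : Set Cantor) : MFn := ofCantor fun p => if p ∈ A then {zeroSeq} else ∅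

/-- `A ⊔ B ⊆ 2^ω`: all `⟨i,p⟩` with `i < 2` and `p ∈ A` if `i = 0`, `p ∈ B` if `i = 1`. -/
def setSum (A B : Set Cantor) : Set Cantor :=
  {r | ∃ p ∈ A, r = inC 0 p} ∪ {r | ∃ p ∈ B, r = inC 1 p}

/-- `A × B ⊆ 2^ω`: all pairs `⟨p,q⟩` with `p ∈ A` and `q ∈ B`. -/
def setProd (A B : Set Cantor) : Set Cantor := {r | ∃ p ∈ A, ∃ q ∈ B, r = pairC p q}

/-- `p` is a name of an instance of `f`. -/
def domName (f : MFn) (p : Cantor) : Prop := ∃ x ∈ f.A.δ p, (f.f x).Nonempty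

/-- `q` is a name of a solution to the instance of `f` named by `p`. -/
def solName (f : MFn) (p q : Cantor) : Prop :=
  ∃ x ∈ f.A.δ p, ∃ y ∈ f.B.δ q, y ∈ f.f x

/-- Strong computable reducibility `f ≤_sc g`: every name `p` of an instance of `f`
computes a name `p'` of an instance of `g` such that every name of a solution to the
latter computes a name of a solution to the former. -/
def scLe (f g : MFn) : Prop :=
  ∀ p, domName f p → ∃ p', TuringLe p' p ∧ domName g p' ∧
    ∀ q, solName g p' q → ∃ z, TuringLe z q ∧ solName f p z

/-- Strong computable equivalence. -/
def scEq (f g : MFn) : Prop := scLe f g ∧ scLe g f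

/-! ### Auxiliary infrastructure for Statement 9 -/

lemma initSeg_length (p : Cantor) (s : ℕ) : (initSeg p s).length = s := by
  simp [initSeg]

lemma initSeg_getD (p : Cantor) {i s : ℕ} (h : i < s) :
    (initSeg p s).getD i false = p i := by
  simp [initSeg, List.getD_eq_getElem?_getD, List.getElem?_map, List.getElem?_range h]

lemma initSeg_prefix (p : Cantor) {s t : ℕ} (h : s ≤ t) :
    initSeg p s <+: initSeg p t := by
  have : initSeg p s = (initSeg p t).take s := by
    rw [initSeg, initSeg, ← List.map_take, List.take_range, min_eq_left h]
  rw [this]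
  exact List.take_prefix _ _

lemma prefix_getD {σ τ : List Bool} (h : σ <+: τ) {i : ℕ} (hi : i < σ.length) :
    τ.getD i false = σ.getD i false := by
  obtain ⟨r, rfl⟩ := h
  exact List.getD_append _ _ _ _ hi

lemma TuringFunctional.approx_unique (Φ : TuringFunctional) (p : Cantor) {n s₁ s₂ : ℕ}
    {b₁ b₂ : Bool} (h₁ : Φ.approx (initSeg p s₁) n = some b₁)
    (h₂ : Φ.approx (initSeg p s₂) n = some b₂) : b₁ = b₂ := by
  have e1 := Φ.mono _ _ _ _ (initSeg_prefix p (le_max_left s₁ s₂)) h₁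
  have e2 := Φ.mono _ _ _ _ (initSeg_prefix p (le_max_right s₁ s₂)) h₂
  rw [e1] at e2
  exact Option.some.inj e2

lemma TuringFunctional.eval_eq_some (Φ : TuringFunctional) (p F : Cantor)
    (h : ∀ n, ∃ s, Φ.approx (initSeg p s) n = some (F n)) : Φ.eval p = Part.some F := by
  have hdom : ∀ n, ∃ s b, Φ.approx (initSeg p s) n = some b :=
    fun n => ⟨(h n).choose, F n, (h n).choose_spec⟩
  rw [Part.eq_some_iff]
  show ∃ hd : _, _ = F
  refine ⟨hdom, funext fun n => ?_⟩
  exact Φ.approx_unique p (hdom n).choose_spec.choose_spec (h n).choose_spec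

def mkTF (use : ℕ → ℕ) (core : Cantor → ℕ → Bool)
    (hu : Primrec use)
    (hcore : Primrec₂ fun (σ : List Bool) (n : ℕ) => core (fun i => σ.getD i false) n)
    (hcont : ∀ (q q' : Cantor) (n : ℕ), (∀ i, i < use n → q i = q' i) →
      core q n = core q' n) : TuringFunctional where
  approx σ n := if use n ≤ σ.length then some (core (fun i => σ.getD i false) n) else none
  computable := by
    apply Primrec₂.to_comp
    have H : Primrec fun p : List Bool × ℕ =>
        if use p.2 ≤ p.1.length then some (core (fun i => p.1.getD i false) p.2) else none := by
      apply Primrec.ite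
      · have := Primrec.nat_le.comp (hu.comp (Primrec.snd (α := List Bool) (β := ℕ)))
          (Primrec.list_length.comp Primrec.fst)
        unfold PrimrecPred at this ⊢
        exact this
      · exact Primrec.option_some.comp (hcore.comp Primrec.fst Primrec.snd)
      · exact Primrec.const none
    exact H.to₂
  mono := by
    intro σ τ n b hpre happ
    by_cases hle : use n ≤ σ.length
    · rw [if_pos hle] at happ
      rw [if_pos (le_trans hle hpre.length_le)]
      rw [← happ]
      congr 1
      exact hcont _ _ n fun i hi => prefix_getD hpre (lt_of_lt_of_le hi hle)
    · rw [if_neg hle] at happ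
      exact absurd happ (by simp)

lemma mkTF_eval (use : ℕ → ℕ) (core : Cantor → ℕ → Bool) (hu hcore hcont) (p : Cantor) :
    (mkTF use core hu hcore hcont).eval p = Part.some (fun n => core p n) := by
  apply TuringFunctional.eval_eq_some
  intro n
  refine ⟨use n, ?_⟩
  show (if use n ≤ (initSeg p (use n)).length then
      some (core (fun i => (initSeg p (use n)).getD i false) n) else none) = some (core p n)
  rw [initSeg_length, if_pos le_rfl]
  congr 1
  exact hcont _ _ n fun i hi => initSeg_getD p hi

/-! ### The transform on monotone approximations -/

lemma unpair_tpl (n s i : ℕ) :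
    (tpl n s i).unpair.1 = n ∧ (tpl n s i).unpair.2.unpair.1 = s ∧
      (tpl n s i).unpair.2.unpair.2 = i := by
  simp [tpl]

lemma tpl_decode (k : ℕ) :
    tpl k.unpair.1 k.unpair.2.unpair.1 k.unpair.2.unpair.2 = k := by
  simp [tpl]

/-- Transform a monotone approximation `a` into one whose value is `⟨{0}, e(a)⟩ = inC 0 (eVal a)`. -/
def Tfun (a : Cantor) : Cantor := fun k =>
  if k.unpair.1 % 2 = 1 then
    decide (k.unpair.2.unpair.1 % 2 = 1) &&
      a (tpl (k.unpair.1 / 2) (k.unpair.2.unpair.1 / 2) k.unpair.2.unpair.2)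
  else
    (decide (k.unpair.2.unpair.1 % 2 = 0) &&
      decide (k.unpair.2.unpair.2 = if k.unpair.1 = 0 then 1 else 0)) &&
    (a (tpl (k.unpair.1 / 2) (k.unpair.2.unpair.1 / 2) 0) ||
      a (tpl (k.unpair.1 / 2) (k.unpair.2.unpair.1 / 2) 1))

lemma Tfun_tpl (a : Cantor) (m t j : ℕ) :
    Tfun a (tpl m t j) = true ↔
      (m % 2 = 1 ∧ t % 2 = 1 ∧ a (tpl (m/2) (t/2) j) = true) ∨
      (m % 2 = 0 ∧ t % 2 = 0 ∧ j = (if m = 0 then 1 else 0) ∧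
        (a (tpl (m/2) (t/2) 0) = true ∨ a (tpl (m/2) (t/2) 1) = true)) := by
  have hm2 : m % 2 = 0 ∨ m % 2 = 1 := Nat.mod_two_eq_zero_or_one m
  unfold Tfun
  simp only [tpl, Nat.unpair_pair]
  rcases hm2 with hm | hm
  · rw [if_neg (by omega)]
    simp only [Bool.and_eq_true, Bool.or_eq_true, decide_eq_true_eq, hm]
    constructor
    · rintro ⟨⟨h1, h2⟩, h3⟩
      exact Or.inr ⟨trivial, h1, h2, h3⟩
    · rintro (⟨h, -⟩ | ⟨-, h1, h2, h3⟩)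
      · omega
      · exact ⟨⟨h1, h2⟩, h3⟩
  · rw [if_pos hm]
    simp only [Bool.and_eq_true, decide_eq_true_eq, hm]
    constructor
    · rintro ⟨h1, h2⟩
      exact Or.inl ⟨trivial, h1, h2⟩
    · rintro (⟨-, h1, h2⟩ | ⟨h, -⟩)
      · exact ⟨h1, h2⟩
      · omega

lemma Tfun_spec {a : Cantor} {m t j : ℕ} (h : Tfun a (tpl m t j) = true) :
    t % 2 = m % 2 ∧ ∃ jj, a (tpl (m/2) (t/2) jj) = true ∧
      (m % 2 = 1 → jj = j) ∧ (m % 2 = 0 → j = (if m = 0 then 1 else 0)) := by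
  rcases (Tfun_tpl a m t j).mp h with ⟨h1, h2, h3⟩ | ⟨h1, h2, h3, h4 | h4⟩
  · exact ⟨by omega, j, h3, fun _ => rfl, fun h0 => by omega⟩
  · exact ⟨by omega, 0, h4, fun h0 => by omega, fun _ => h3⟩
  · exact ⟨by omega, 1, h4, fun h0 => by omega, fun _ => h3⟩

lemma Tfun_total {a : Cantor} (ha : TotalMonotoneApprox a) :
    TotalMonotoneApprox (Tfun a) := by
  obtain ⟨⟨haform, hauniq, haincr⟩, hatot⟩ := ha
  refine ⟨⟨?_, ?_, ?_⟩, ?_⟩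
  · -- form
    intro k hk
    rw [← tpl_decode k] at hk
    set m := k.unpair.1; set t := k.unpair.2.unpair.1; set j := k.unpair.2.unpair.2
    obtain ⟨hpar, jj, hjj, hodd, heven⟩ := Tfun_spec hk
    refine ⟨m, t, j, ?_, (tpl_decode k).symm⟩
    rcases Nat.mod_two_eq_zero_or_one m with hm | hm
    · rw [heven hm]; split <;> omega
    · obtain ⟨n', s', i', hi', he⟩ := haform _ hjj
      obtain ⟨-, -, e3⟩ := tpl_inj he
      have := hodd hm
      omega
  · -- uniqueness
    intro n s t i j h1 h2
    obtain ⟨hp1, jj1, hjj1, ho1, he1⟩ := Tfun_spec h1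
    obtain ⟨hp2, jj2, hjj2, ho2, he2⟩ := Tfun_spec h2
    obtain ⟨hst, hij⟩ := hauniq _ _ _ _ _ hjj1 hjj2
    rcases Nat.mod_two_eq_zero_or_one n with hn | hn
    · refine ⟨by omega, ?_⟩
      rw [he1 hn, he2 hn]
    · refine ⟨by omega, ?_⟩
      rw [← ho1 hn, ← ho2 hn, hij]
  · -- increasing
    intro m n s t i j h1 h2 hmn
    obtain ⟨hp1, jj1, hjj1, -, -⟩ := Tfun_spec h1
    obtain ⟨hp2, jj2, hjj2, -, -⟩ := Tfun_spec h2
    have hle : m / 2 ≤ n / 2 := by omega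
    rcases lt_or_eq_of_le hle with hlt | heq
    · have := haincr _ _ _ _ _ _ hjj1 hjj2 hlt
      omega
    · rw [heq] at hjj1
      obtain ⟨hst, -⟩ := hauniq _ _ _ _ _ hjj1 hjj2
      have hm0 : m % 2 = 0 := by omega
      have hn1 : n % 2 = 1 := by omega
      omega
  · -- totality
    intro n
    obtain ⟨s, i, hi, hs⟩ := hatot (n / 2)
    rcases Nat.mod_two_eq_zero_or_one n with hn | hn
    · refine ⟨2 * s, if n = 0 then 1 else 0, by split <;> omega, ?_⟩
      rw [Tfun_tpl]
      refine Or.inr ⟨hn, by omega, rfl, ?_⟩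
      rw [show 2 * s / 2 = s by omega]
      interval_cases i
      · exact Or.inl hs
      · exact Or.inr hs
    · refine ⟨2 * s + 1, i, by omega, ?_⟩
      rw [Tfun_tpl]
      refine Or.inl ⟨hn, by omega, ?_⟩
      rw [show (2 * s + 1) / 2 = s by omega]
      exact hs

lemma eVal_Tfun {a : Cantor} (ha : TotalMonotoneApprox a) :
    eVal (Tfun a) = pairC (natSet 0) (eVal a) := by
  funext n
  rcases Nat.mod_two_eq_zero_or_one n with hn | hn
  · have hrhs : pairC (natSet 0) (eVal a) n = decide (n / 2 = 0) := by
      simp [pairC, natSet, hn]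
    rw [hrhs]
    unfold eVal
    rw [decide_eq_decide]
    constructor
    · rintro ⟨t, ht⟩
      rcases (Tfun_tpl a n t 1).mp ht with ⟨h1, -, -⟩ | ⟨-, -, h3, -⟩
      · omega
      · split at h3 <;> omega
    · intro h0
      have hn0 : n = 0 := by omega
      subst hn0
      obtain ⟨s, i, hi, hs⟩ := ha.2 0
      refine ⟨2 * s, ?_⟩
      rw [Tfun_tpl]
      refine Or.inr ⟨rfl, by omega, by simp, ?_⟩
      rw [show 2 * s / 2 = s by omega, show (0:ℕ) / 2 = 0 by omega]
      interval_cases i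
      · exact Or.inl hs
      · exact Or.inr hs
  · have hrhs : pairC (natSet 0) (eVal a) n = eVal a (n / 2) := by
      simp [pairC, hn]
    rw [hrhs]
    unfold eVal
    rw [decide_eq_decide]
    constructor
    · rintro ⟨t, ht⟩
      rcases (Tfun_tpl a n t 1).mp ht with ⟨-, -, h3⟩ | ⟨h1, -⟩
      · exact ⟨t / 2, h3⟩
      · omega
    · rintro ⟨s, hs⟩
      refine ⟨2 * s + 1, ?_⟩
      rw [Tfun_tpl]
      refine Or.inl ⟨hn, by omega, ?_⟩
      rw [show (2 * s + 1) / 2 = s by omega]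
      exact hs

/-! ### The input-side functional Φ -/

def piPhi (n : ℕ) : ℕ :=
  if n % 2 = 0 then
    (if (n / 2) % 2 = 0 then 2 * (n / 2 / 2) else 2 * (2 * (n / 2 / 2)) + 1)
  else 2 * (2 * (n / 2) + 1) + 1

def corePhi (q : Cantor) : Cantor := fun n => q (piPhi n)

lemma corePhi_eq (q : Cantor) :
    corePhi q = pairC (pairC (leftC q) (leftC (rightC q))) (rightC (rightC q)) := by
  funext n
  simp only [corePhi, piPhi, pairC, leftC, rightC]
  split_ifs <;> rfl

lemma primrec_piPhi : Primrec piPhi := by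
  have pd2 : Primrec (fun n : ℕ => n / 2) := Primrec.nat_div.comp .id (.const 2)
  have pm2 : Primrec (fun n : ℕ => n % 2) := Primrec.nat_mod.comp .id (.const 2)
  have pP0 : PrimrecPred (fun n : ℕ => n % 2 = 0) := by
    have := PrimrecRel.comp Primrec.eq pm2 (Primrec.const 0)
    unfold PrimrecPred at this ⊢
    exact this
  have pP1 : PrimrecPred (fun n : ℕ => (n / 2) % 2 = 0) := by
    have := PrimrecRel.comp Primrec.eq (pm2.comp pd2) (Primrec.const 0)
    unfold PrimrecPred at this ⊢
    exact this
  have pA : Primrec (fun n : ℕ => 2 * (n / 2 / 2)) :=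
    Primrec.nat_mul.comp (.const 2) (pd2.comp pd2)
  unfold piPhi
  apply Primrec.ite pP0
  · apply Primrec.ite pP1 pA
    exact Primrec.nat_add.comp (Primrec.nat_mul.comp (.const 2) pA) (.const 1)
  · exact Primrec.nat_add.comp
      (Primrec.nat_mul.comp (.const 2)
        (Primrec.nat_add.comp (Primrec.nat_mul.comp (.const 2) pd2) (.const 1)))
      (.const 1)

def PhiTF : TuringFunctional :=
  mkTF (fun n => piPhi n + 1) (fun q n => corePhi q n)
    (Primrec.nat_add.comp primrec_piPhi (.const 1))
    (((Primrec.list_getD false).comp Primrec.fst (primrec_piPhi.comp Primrec.snd)).to₂)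
    (by
      intro q q' n hag
      exact hag (piPhi n) (by simp))

lemma PhiTF_eval (p : Cantor) : PhiTF.eval p = Part.some (corePhi p) := by
  exact mkTF_eval _ _ _ _ _ p

/-! ### The output-side functional Ψ -/

lemma primrec_decide_eq {α} [Primcodable α] {f g : α → ℕ} (hf : Primrec f) (hg : Primrec g)
    {inst : ∀ a, Decidable (f a = g a)} :
    Primrec (fun a => @decide (f a = g a) (inst a)) := by
  have := PrimrecRel.comp (Primrec.eq (α := ℕ)) hf hg
  unfold PrimrecPred at this
  convert PrimrecPred.decide (p := fun a => f a = g a) this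

lemma primrecPred_eq {α} [Primcodable α] {f g : α → ℕ} (hf : Primrec f) (hg : Primrec g) :
    PrimrecPred (fun a => f a = g a) := by
  have := PrimrecRel.comp (Primrec.eq (α := ℕ)) hf hg
  unfold PrimrecPred at this ⊢
  exact this

def EW (q : Cantor) : Cantor := maEncode (inC 1 (rightC q))

def corePsi (q : Cantor) : Cantor := fun n =>
  bif q 0 then pairC (Tfun (leftC (rightC q))) (Tfun (rightC (rightC q))) n
  else pairC (EW q) (EW q) n

lemma corePsi_true {q : Cantor} (hq : q 0 = true) :
    (fun n => corePsi q n) = pairC (Tfun (leftC (rightC q))) (Tfun (rightC (rightC q))) := by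
  funext n; simp [corePsi, hq]

lemma corePsi_false {q : Cantor} (hq : q 0 = false) :
    (fun n => corePsi q n) = pairC (EW q) (EW q) := by
  funext n; simp [corePsi, hq]

lemma pairC_diag (a : Cantor) (n : ℕ) : pairC a a n = a (n / 2) := by
  by_cases h : n % 2 = 0 <;> simp [pairC, h]

def offPsi (n : ℕ) : ℕ := bif decide (n % 2 = 0) then 1 else 3

def ixJ (n : ℕ) : ℕ :=
  4 * tpl ((n/2).unpair.1 / 2) ((n/2).unpair.2.unpair.1 / 2) ((n/2).unpair.2.unpair.2) + offPsi n

def ix0 (n : ℕ) : ℕ :=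
  4 * tpl ((n/2).unpair.1 / 2) ((n/2).unpair.2.unpair.1 / 2) 0 + offPsi n

def ix1 (n : ℕ) : ℕ :=
  4 * tpl ((n/2).unpair.1 / 2) ((n/2).unpair.2.unpair.1 / 2) 1 + offPsi n

def usePsi (n : ℕ) : ℕ := ixJ n + ix0 n + ix1 n + (n/2).unpair.1 + 1

def exPsi (q : Cantor) (n : ℕ) : Bool :=
  bif q 0 then
    (bif decide ((n/2).unpair.1 % 2 = 1) then
      decide ((n/2).unpair.2.unpair.1 % 2 = 1) && q (ixJ n)
    else
      (decide ((n/2).unpair.2.unpair.1 % 2 = 0) &&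
        decide ((n/2).unpair.2.unpair.2 = if (n/2).unpair.1 = 0 then 1 else 0)) &&
      (q (ix0 n) || q (ix1 n)))
  else
    decide ((n/2).unpair.2.unpair.1 = (n/2).unpair.1) &&
    (bif (bif decide ((n/2).unpair.1 % 2 = 0) then decide ((n/2).unpair.1 / 2 = 1)
          else q ((n/2).unpair.1))
     then decide ((n/2).unpair.2.unpair.2 = 1) else decide ((n/2).unpair.2.unpair.2 = 0))

lemma maEncode_eval (w : Cantor) (k : ℕ) :
    maEncode w k = (decide (k.unpair.2.unpair.1 = k.unpair.1) &&
      (bif w k.unpair.1 then decide (k.unpair.2.unpair.2 = 1)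
       else decide (k.unpair.2.unpair.2 = 0))) := by
  rw [Bool.eq_iff_iff]
  simp only [maEncode_mem, Bool.and_eq_true, decide_eq_true_eq]
  constructor
  · rintro ⟨n', he⟩
    subst he
    simp only [tpl, Nat.unpair_pair]
    refine ⟨trivial, ?_⟩
    cases hw : w n' <;> simp [hw]
  · rintro ⟨h1, h2⟩
    refine ⟨k.unpair.1, ?_⟩
    conv_lhs => rw [← tpl_decode k]
    rw [h1]
    congr 1
    cases hw : w k.unpair.1 <;> rw [hw] at h2 <;> simp at h2 <;> simp [h2]

lemma corePsi_eq_exPsi (q : Cantor) (n : ℕ) : corePsi q n = exPsi q n := by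
  have hA : leftC (rightC q) = fun i => q (4 * i + 1) := by
    funext i; simp only [leftC, rightC]; congr 1; omega
  have hB : rightC (rightC q) = fun i => q (4 * i + 3) := by
    funext i; simp only [rightC]; congr 1; omega
  cases hq : q 0
  · -- q 0 = false
    simp only [corePsi, exPsi, hq, cond_false]
    rw [pairC_diag, EW, maEncode_eval]
    have hwm : inC 1 (rightC q) (n/2).unpair.1 =
        (bif decide ((n/2).unpair.1 % 2 = 0) then decide ((n/2).unpair.1 / 2 = 1)
         else q ((n/2).unpair.1)) := by
      by_cases hm : (n/2).unpair.1 % 2 = 0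
      · simp [inC, pairC, natSet, hm]
      · rw [show (decide ((n/2).unpair.1 % 2 = 0)) = false from by simp [hm]]
        simp only [cond_false, inC, pairC, rightC, if_neg hm]
        congr 1
        omega
    rw [hwm]
  · -- q 0 = true
    simp only [corePsi, exPsi, hq, cond_true]
    rcases Nat.mod_two_eq_zero_or_one n with hn | hn
    · have hoff : offPsi n = 1 := by simp [offPsi, hn]
      have hp : pairC (Tfun (leftC (rightC q))) (Tfun (rightC (rightC q))) n =
          Tfun (leftC (rightC q)) (n / 2) := by simp [pairC, hn]
      rw [hp, hA, Tfun]
      by_cases hm : (n/2).unpair.1 % 2 = 1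
      · simp only [hm, if_pos, decide_true, cond_true, ixJ, hoff]
      · simp only [hm, if_neg, decide_false, cond_false, ix0, ix1, hoff]
        simp
    · have hoff : offPsi n = 3 := by simp [offPsi, hn]
      have hp : pairC (Tfun (leftC (rightC q))) (Tfun (rightC (rightC q))) n =
          Tfun (rightC (rightC q)) (n / 2) := by simp [pairC, hn]
      rw [hp, hB, Tfun]
      by_cases hm : (n/2).unpair.1 % 2 = 1
      · simp only [hm, if_pos, decide_true, cond_true, ixJ, hoff]
      · simp only [hm, if_neg, decide_false, cond_false, ix0, ix1, hoff]
        simp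

lemma exPsi_cont (q q' : Cantor) (n : ℕ) (hag : ∀ i, i < usePsi n → q i = q' i) :
    exPsi q n = exPsi q' n := by
  have h0 := hag 0 (by unfold usePsi ixJ offPsi; omega)
  have hJ := hag (ixJ n) (by unfold usePsi; omega)
  have h00 := hag (ix0 n) (by unfold usePsi; omega)
  have h11 := hag (ix1 n) (by unfold usePsi; omega)
  have hm := hag ((n/2).unpair.1) (by unfold usePsi; omega)
  simp only [exPsi, h0, hJ, h00, h11, hm]

section PrimrecPieces

lemma primrec_unp1 : Primrec (fun n : ℕ => (n/2).unpair.1) :=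
  Primrec.fst.comp (Primrec.unpair.comp (Primrec.nat_div.comp .id (.const 2)))

lemma primrec_t : Primrec (fun n : ℕ => (n/2).unpair.2.unpair.1) :=
  Primrec.fst.comp (Primrec.unpair.comp
    (Primrec.snd.comp (Primrec.unpair.comp (Primrec.nat_div.comp .id (.const 2)))))

lemma primrec_j : Primrec (fun n : ℕ => (n/2).unpair.2.unpair.2) :=
  Primrec.snd.comp (Primrec.unpair.comp
    (Primrec.snd.comp (Primrec.unpair.comp (Primrec.nat_div.comp .id (.const 2)))))

lemma primrec_offPsi : Primrec offPsi :=
  Primrec.cond (primrec_decide_eq (Primrec.nat_mod.comp .id (.const 2)) (.const 0))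
    (.const 1) (.const 3)

lemma primrec_tplPart {c : ℕ → ℕ} (hc : Primrec c) :
    Primrec (fun n => tpl ((n/2).unpair.1 / 2) ((n/2).unpair.2.unpair.1 / 2) (c n)) :=
  Primrec₂.natPair.comp (Primrec.nat_div.comp primrec_unp1 (.const 2))
    (Primrec₂.natPair.comp (Primrec.nat_div.comp primrec_t (.const 2)) hc)

lemma primrec_ixJ : Primrec ixJ :=
  Primrec.nat_add.comp (Primrec.nat_mul.comp (.const 4) (primrec_tplPart primrec_j))
    primrec_offPsi

lemma primrec_ix0 : Primrec ix0 :=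
  Primrec.nat_add.comp (Primrec.nat_mul.comp (.const 4) (primrec_tplPart (.const 0)))
    primrec_offPsi

lemma primrec_ix1 : Primrec ix1 :=
  Primrec.nat_add.comp (Primrec.nat_mul.comp (.const 4) (primrec_tplPart (.const 1)))
    primrec_offPsi

lemma primrec_usePsi : Primrec usePsi :=
  Primrec.nat_add.comp
    (Primrec.nat_add.comp
      (Primrec.nat_add.comp (Primrec.nat_add.comp primrec_ixJ primrec_ix0) primrec_ix1)
      primrec_unp1) (.const 1)

lemma primrec_exPsi :
    Primrec₂ fun (σ : List Bool) (n : ℕ) => exPsi (fun i => σ.getD i false) n := by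
  have plook : ∀ {c : ℕ → ℕ}, Primrec c →
      Primrec (fun x : List Bool × ℕ => x.1.getD (c x.2) false) := fun hc =>
    (Primrec.list_getD false).comp Primrec.fst (hc.comp Primrec.snd)
  have pband : Primrec₂ (· && ·) := Primrec.dom_bool₂ _
  have pbor : Primrec₂ (· || ·) := Primrec.dom_bool₂ _
  have pt1 : Primrec (fun n : ℕ => decide ((n/2).unpair.2.unpair.1 % 2 = 1)) :=
    primrec_decide_eq (Primrec.nat_mod.comp primrec_t (.const 2)) (.const 1)
  have pt0 : Primrec (fun n : ℕ => decide ((n/2).unpair.2.unpair.1 % 2 = 0)) :=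
    primrec_decide_eq (Primrec.nat_mod.comp primrec_t (.const 2)) (.const 0)
  have pm1 : Primrec (fun n : ℕ => decide ((n/2).unpair.1 % 2 = 1)) :=
    primrec_decide_eq (Primrec.nat_mod.comp primrec_unp1 (.const 2)) (.const 1)
  have pm0 : Primrec (fun n : ℕ => decide ((n/2).unpair.1 % 2 = 0)) :=
    primrec_decide_eq (Primrec.nat_mod.comp primrec_unp1 (.const 2)) (.const 0)
  have pjval : Primrec (fun n : ℕ =>
      decide ((n/2).unpair.2.unpair.2 = if (n/2).unpair.1 = 0 then 1 else 0)) :=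
    primrec_decide_eq primrec_j
      (Primrec.ite (primrecPred_eq primrec_unp1 (.const 0)) (.const 1) (.const 0))
  have ptm : Primrec (fun n : ℕ => decide ((n/2).unpair.2.unpair.1 = (n/2).unpair.1)) :=
    primrec_decide_eq primrec_t primrec_unp1
  have pdiv1 : Primrec (fun n : ℕ => decide ((n/2).unpair.1 / 2 = 1)) :=
    primrec_decide_eq (Primrec.nat_div.comp primrec_unp1 (.const 2)) (.const 1)
  have pj1 : Primrec (fun n : ℕ => decide ((n/2).unpair.2.unpair.2 = 1)) :=
    primrec_decide_eq primrec_j (.const 1)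
  have pj0 : Primrec (fun n : ℕ => decide ((n/2).unpair.2.unpair.2 = 0)) :=
    primrec_decide_eq primrec_j (.const 0)
  unfold Primrec₂
  show Primrec fun p : List Bool × ℕ => exPsi (fun i => p.1.getD i false) p.2
  simp only [exPsi]
  exact Primrec.cond (plook (.const 0))
    (Primrec.cond (pm1.comp .snd)
      (pband.comp (pt1.comp .snd) (plook primrec_ixJ))
      (pband.comp (pband.comp (pt0.comp .snd) (pjval.comp .snd))
        (pbor.comp (plook primrec_ix0) (plook primrec_ix1))))
    (pband.comp (ptm.comp .snd)
      (Primrec.cond (Primrec.cond (pm0.comp .snd) (pdiv1.comp .snd) (plook primrec_unp1))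
        (pj1.comp .snd) (pj0.comp .snd)))

end PrimrecPieces

def PsiTF : TuringFunctional :=
  mkTF usePsi (fun q n => corePsi q n) primrec_usePsi
    (by
      have := primrec_exPsi
      unfold Primrec₂ at this ⊢
      exact this.of_eq fun p => (corePsi_eq_exPsi _ _).symm)
    (by
      intro q q' n hag
      exact (corePsi_eq_exPsi q n).trans
        ((exPsi_cont q q' n hag).trans (corePsi_eq_exPsi q' n).symm))

lemma PsiTF_eval (p : Cantor) : PsiTF.eval p = Part.some (fun n => corePsi p n) :=
  mkTF_eval _ _ _ _ _ p

/-! ### Semantic lemmas -/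

lemma natSet_one_ne_zero : natSet 1 ≠ natSet 0 := by
  intro h
  have := congrFun h 0
  simp [natSet] at this

lemma q0_of_leftC_zero {q : Cantor} (h : leftC q = natSet 0) : q 0 = true := by
  have := congrFun h 0
  simpa [leftC, natSet] using this

lemma q0_of_leftC_one {q : Cantor} (h : leftC q = natSet 1) : q 0 = false := by
  have := congrFun h 0
  simpa [leftC, natSet] using this

lemma hatSum_some_inl {A B : RepSp} {a : Cantor} {y : A.X} (ha : TotalMonotoneApprox a)
    (hy : y ∈ A.δ (eVal a)) :
    ((evalMA (Tfun a)).bind (A.sum B).δ).toOption = some (Sum.inl y) := by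
  refine Part.toOption_eq_some_iff.mpr ?_
  refine Part.mem_bind_iff.mpr ⟨eVal (Tfun a), ⟨Tfun_total ha, rfl⟩, ?_⟩
  rw [eVal_Tfun ha]
  show Sum.inl y ∈ (A.sum B).δ (pairC (natSet 0) (eVal a))
  simp only [RepSp.sum]
  rw [leftC_pairC, rightC_pairC, if_pos rfl]
  exact Part.mem_map _ hy

lemma hatSum_some_inr {A B : RepSp} {z : Cantor} {v : B.X} (hv : v ∈ B.δ z) :
    ((evalMA (maEncode (inC 1 z))).bind (A.sum B).δ).toOption = some (Sum.inr v) := by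
  refine Part.toOption_eq_some_iff.mpr ?_
  refine Part.mem_bind_iff.mpr ⟨inC 1 z, ⟨maEncode_total _, eVal_maEncode _⟩, ?_⟩
  show Sum.inr v ∈ (A.sum B).δ (inC 1 z)
  simp only [RepSp.sum, inC]
  rw [leftC_pairC, rightC_pairC, if_neg natSet_one_ne_zero, if_pos rfl]
  exact Part.mem_map _ hv

/-- Proposition 4.1(1): `(f ⊓ h) ⊞ (g ⊓ h) ≤_sW (f ⊞ g) ⊓ h`. -/
theorem stmt9 : ∀ f g h : MFn,
    sWLe ((f.sqcap h).boxplus (g.sqcap h)) ((f.boxplus g).sqcap h) := by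
  intro f g h
  refine ⟨PhiTF, PsiTF, ?_⟩
  intro G hG p x hx hne
  simp only [MFn.boxplus, MFn.sqcap, RepSp.sum] at hx
  by_cases hc0 : leftC p = natSet 0
  · rw [if_pos hc0] at hx
    obtain ⟨xu, hxu, rfl⟩ := (Part.mem_map_iff _).mp hx
    simp only [RepSp.prod] at hxu
    obtain ⟨x₀, hx₀, hmap⟩ := Part.mem_bind_iff.mp hxu
    obtain ⟨u, hu, hxy⟩ := (Part.mem_map_iff _).mp hmap
    subst hxy
    -- extract nonemptiness of f.f x₀ and h.f u
    simp only [MFn.boxplus, MFn.sqcap, Sum.elim_inl] at hne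
    obtain ⟨⟨o1, o2⟩, ho⟩ := hne
    replace ho := Set.mem_prod.mp ho
    obtain ⟨w, hw, -⟩ := ho.1
    by_cases hcond : (f.f x₀).Nonempty ∧ (h.f u).Nonempty
    swap
    · rw [if_neg hcond] at hw
      exact absurd hw (Set.notMem_empty _)
    -- the transformed instance name
    have hL : leftC (corePhi p) = pairC (natSet 0) (leftC (rightC p)) := by
      rw [corePhi_eq, leftC_pairC, hc0]
    have hR : rightC (corePhi p) = rightC (rightC p) := by
      rw [corePhi_eq, rightC_pairC]
    have hx' : (Sum.inl x₀, u) ∈ ((f.boxplus g).sqcap h).A.δ (corePhi p) := by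
      simp only [MFn.sqcap, MFn.boxplus, RepSp.prod]
      refine Part.mem_bind_iff.mpr ⟨Sum.inl x₀, ?_, (Part.mem_map_iff _).mpr ⟨u, ?_, rfl⟩⟩
      · rw [hL]
        simp only [RepSp.sum]
        rw [leftC_pairC, rightC_pairC, if_pos rfl]
        exact Part.mem_map _ hx₀
      · rw [hR]
        exact hu
    have hx'ne : (((f.boxplus g).sqcap h).f (Sum.inl x₀, u)).Nonempty := by
      simp only [MFn.sqcap, MFn.boxplus, Sum.elim_inl]
      obtain ⟨vh, hvh⟩ := hcond.2
      rw [if_pos ⟨((hcond.1.image some).prod Set.univ_nonempty), hcond.2⟩]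
      exact ⟨Sum.inr vh, Or.inr ⟨vh, hvh, rfl⟩⟩
    obtain ⟨q, hqG, y', hy', hy'f⟩ := hG (corePhi p) (Sum.inl x₀, u) hx' hx'ne
    -- membership of the composite output
    have hmem : (fun n => corePsi q n) ∈ pcomp PsiTF.eval (pcomp G PhiTF.eval) p := by
      refine Part.mem_bind_iff.mpr ⟨q, ?_, ?_⟩
      · refine Part.mem_bind_iff.mpr ⟨corePhi p, ?_, hqG⟩
        rw [PhiTF_eval]
        exact Part.mem_some _
      · rw [PsiTF_eval]
        exact Part.mem_some _
    refine ⟨(fun n => corePsi q n), hmem, ?_⟩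
    -- analyse the solution name q
    simp only [MFn.sqcap, MFn.boxplus, RepSp.sum] at hy'
    simp only [MFn.sqcap, MFn.boxplus, Sum.elim_inl] at hy'f
    rw [if_pos ⟨((hcond.1.image some).prod Set.univ_nonempty), hcond.2⟩] at hy'f
    by_cases hq0 : leftC q = natSet 0
    · rw [if_pos hq0] at hy'
      obtain ⟨ob, hob, rfl⟩ := (Part.mem_map_iff _).mp hy'
      simp only [RepSp.prod, RepSp.hat] at hob
      obtain ⟨oa, hoa, hmap2⟩ := Part.mem_bind_iff.mp hob
      obtain ⟨obb, hobb, hpair⟩ := (Part.mem_map_iff _).mp hmap2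
      rw [Part.mem_some_iff] at hoa hobb
      subst hoa hobb hpair
      rcases hy'f with ⟨ab, hab, habe⟩ | ⟨v, -, habs⟩
      swap
      · exact absurd habs (by simp)
      have hab' : ab = (_, _) := Sum.inl.inj habe
      subst hab'
      replace hab := Set.mem_prod.mp hab
      simp only [MFn.boxplus, Sum.elim_inl] at hab
      obtain ⟨y₀, hy₀, hoa2⟩ := hab.1
      -- decode the hat-name of y₀
      obtain ⟨e, he, hee⟩ := Part.mem_bind_iff.mp (Part.toOption_eq_some_iff.mp hoa2.symm)
      obtain ⟨ha₀, he'⟩ := he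
      rw [← he'] at hee
      have q0t : q 0 = true := q0_of_leftC_zero hq0
      have hCL : leftC (fun n => corePsi q n) = Tfun (leftC (rightC q)) := by
        rw [corePsi_true q0t, leftC_pairC]
      have hCR : rightC (fun n => corePsi q n) = Tfun (rightC (rightC q)) := by
        rw [corePsi_true q0t, rightC_pairC]
      refine ⟨(some (Sum.inl y₀),
        ((evalMA (Tfun (rightC (rightC q)))).bind (g.B.sum h.B).δ).toOption), ?_, ?_⟩
      · simp only [MFn.boxplus, MFn.sqcap, RepSp.prod, RepSp.hat]
        refine Part.mem_bind_iff.mpr ⟨some (Sum.inl y₀), ?_,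
          (Part.mem_map_iff _).mpr ⟨_, Part.mem_some _, ?_⟩⟩
        · rw [Part.mem_some_iff, hCL]
          exact (hatSum_some_inl ha₀ hee).symm
        · rw [hCR]
      · simp only [MFn.boxplus, MFn.sqcap, Sum.elim_inl]
        refine Set.mem_prod.mpr ?_
        refine ⟨?_, Set.mem_univ _⟩
        rw [if_pos hcond]
        exact ⟨Sum.inl y₀, Or.inl ⟨y₀, hy₀, rfl⟩, rfl⟩
    by_cases hq1 : leftC q = natSet 1
    · rw [if_neg hq0, if_pos hq1] at hy'
      obtain ⟨v, hv, rfl⟩ := (Part.mem_map_iff _).mp hy'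
      rcases hy'f with ⟨ab, -, habe⟩ | ⟨v', hv', habs⟩
      · exact absurd habe (by simp)
      have hv2 : v ∈ h.f u := by rwa [Sum.inr.inj habs] at hv'
      have q0f : q 0 = false := q0_of_leftC_one hq1
      have hCL : leftC (fun n => corePsi q n) = EW q := by
        rw [corePsi_false q0f, leftC_pairC]
      have hCR : rightC (fun n => corePsi q n) = EW q := by
        rw [corePsi_false q0f, rightC_pairC]
      refine ⟨(some (Sum.inr v), some (Sum.inr v)), ?_, ?_⟩
      · simp only [MFn.boxplus, MFn.sqcap, RepSp.prod, RepSp.hat]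
        refine Part.mem_bind_iff.mpr ⟨some (Sum.inr v), ?_,
          (Part.mem_map_iff _).mpr ⟨some (Sum.inr v), ?_, rfl⟩⟩
        · rw [Part.mem_some_iff, hCL, EW]
          exact (hatSum_some_inr hv).symm
        · rw [Part.mem_some_iff, hCR, EW]
          exact (hatSum_some_inr hv).symm
      · simp only [MFn.boxplus, MFn.sqcap, Sum.elim_inl]
        refine Set.mem_prod.mpr ?_
        refine ⟨?_, Set.mem_univ _⟩
        rw [if_pos hcond]
        exact ⟨Sum.inr v, Or.inr ⟨v, hv2, rfl⟩, rfl⟩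
    · rw [if_neg hq0, if_neg hq1] at hy'
      exact absurd hy' (Part.notMem_none _)
  · rw [if_neg hc0] at hx
    by_cases hc1 : leftC p = natSet 1
    swap
    · rw [if_neg hc1] at hx
      exact absurd hx (Part.notMem_none _)
    rw [if_pos hc1] at hx
    obtain ⟨xu, hxu, rfl⟩ := (Part.mem_map_iff _).mp hx
    simp only [RepSp.prod] at hxu
    obtain ⟨x₁, hx₁, hmap⟩ := Part.mem_bind_iff.mp hxu
    obtain ⟨u, hu, hxy⟩ := (Part.mem_map_iff _).mp hmap
    subst hxy
    simp only [MFn.boxplus, MFn.sqcap, Sum.elim_inr] at hne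
    obtain ⟨⟨o1, o2⟩, ho⟩ := hne
    replace ho := Set.mem_prod.mp ho
    obtain ⟨w, hw, -⟩ := ho.2
    by_cases hcond : (g.f x₁).Nonempty ∧ (h.f u).Nonempty
    swap
    · rw [if_neg hcond] at hw
      exact absurd hw (Set.notMem_empty _)
    have hL : leftC (corePhi p) = pairC (natSet 1) (leftC (rightC p)) := by
      rw [corePhi_eq, leftC_pairC, hc1]
    have hR : rightC (corePhi p) = rightC (rightC p) := by
      rw [corePhi_eq, rightC_pairC]
    have hx' : (Sum.inr x₁, u) ∈ ((f.boxplus g).sqcap h).A.δ (corePhi p) := by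
      simp only [MFn.sqcap, MFn.boxplus, RepSp.prod]
      refine Part.mem_bind_iff.mpr ⟨Sum.inr x₁, ?_, (Part.mem_map_iff _).mpr ⟨u, ?_, rfl⟩⟩
      · rw [hL]
        simp only [RepSp.sum]
        rw [leftC_pairC, rightC_pairC, if_neg natSet_one_ne_zero, if_pos rfl]
        exact Part.mem_map _ hx₁
      · rw [hR]
        exact hu
    have hx'ne : (((f.boxplus g).sqcap h).f (Sum.inr x₁, u)).Nonempty := by
      simp only [MFn.sqcap, MFn.boxplus, Sum.elim_inr]
      obtain ⟨vh, hvh⟩ := hcond.2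
      rw [if_pos ⟨(Set.univ_nonempty.prod (hcond.1.image some)), hcond.2⟩]
      exact ⟨Sum.inr vh, Or.inr ⟨vh, hvh, rfl⟩⟩
    obtain ⟨q, hqG, y', hy', hy'f⟩ := hG (corePhi p) (Sum.inr x₁, u) hx' hx'ne
    have hmem : (fun n => corePsi q n) ∈ pcomp PsiTF.eval (pcomp G PhiTF.eval) p := by
      refine Part.mem_bind_iff.mpr ⟨q, ?_, ?_⟩
      · refine Part.mem_bind_iff.mpr ⟨corePhi p, ?_, hqG⟩
        rw [PhiTF_eval]
        exact Part.mem_some _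
      · rw [PsiTF_eval]
        exact Part.mem_some _
    refine ⟨(fun n => corePsi q n), hmem, ?_⟩
    simp only [MFn.sqcap, MFn.boxplus, RepSp.sum] at hy'
    simp only [MFn.sqcap, MFn.boxplus, Sum.elim_inr] at hy'f
    rw [if_pos ⟨(Set.univ_nonempty.prod (hcond.1.image some)), hcond.2⟩] at hy'f
    by_cases hq0 : leftC q = natSet 0
    · rw [if_pos hq0] at hy'
      obtain ⟨ob, hob, rfl⟩ := (Part.mem_map_iff _).mp hy'
      simp only [RepSp.prod, RepSp.hat] at hob
      obtain ⟨oa, hoa, hmap2⟩ := Part.mem_bind_iff.mp hob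
      obtain ⟨obb, hobb, hpair⟩ := (Part.mem_map_iff _).mp hmap2
      rw [Part.mem_some_iff] at hoa hobb
      subst hoa hobb hpair
      rcases hy'f with ⟨ab, hab, habe⟩ | ⟨v, -, habs⟩
      swap
      · exact absurd habs (by simp)
      have hab' : ab = (_, _) := Sum.inl.inj habe
      subst hab'
      replace hab := Set.mem_prod.mp hab
      simp only [MFn.boxplus, Sum.elim_inr] at hab
      obtain ⟨y₁, hy₁, hoa2⟩ := hab.2
      obtain ⟨e, he, hee⟩ := Part.mem_bind_iff.mp (Part.toOption_eq_some_iff.mp hoa2.symm)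
      obtain ⟨ha₁, he'⟩ := he
      rw [← he'] at hee
      have q0t : q 0 = true := q0_of_leftC_zero hq0
      have hCL : leftC (fun n => corePsi q n) = Tfun (leftC (rightC q)) := by
        rw [corePsi_true q0t, leftC_pairC]
      have hCR : rightC (fun n => corePsi q n) = Tfun (rightC (rightC q)) := by
        rw [corePsi_true q0t, rightC_pairC]
      refine ⟨(((evalMA (Tfun (leftC (rightC q)))).bind (f.B.sum h.B).δ).toOption,
        some (Sum.inl y₁)), ?_, ?_⟩
      · simp only [MFn.boxplus, MFn.sqcap, RepSp.prod, RepSp.hat]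
        refine Part.mem_bind_iff.mpr ⟨_, Part.mem_some _,
          (Part.mem_map_iff _).mpr ⟨some (Sum.inl y₁), ?_, ?_⟩⟩
        · rw [Part.mem_some_iff, hCR]
          exact (hatSum_some_inl ha₁ hee).symm
        · rw [hCL]
      · simp only [MFn.boxplus, MFn.sqcap, Sum.elim_inr]
        refine Set.mem_prod.mpr ?_
        refine ⟨Set.mem_univ _, ?_⟩
        rw [if_pos hcond]
        exact ⟨Sum.inl y₁, Or.inl ⟨y₁, hy₁, rfl⟩, rfl⟩
    by_cases hq1 : leftC q = natSet 1
    · rw [if_neg hq0, if_pos hq1] at hy'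
      obtain ⟨v, hv, rfl⟩ := (Part.mem_map_iff _).mp hy'
      rcases hy'f with ⟨ab, -, habe⟩ | ⟨v', hv', habs⟩
      · exact absurd habe (by simp)
      have hv2 : v ∈ h.f u := by rwa [Sum.inr.inj habs] at hv'
      have q0f : q 0 = false := q0_of_leftC_one hq1
      have hCL : leftC (fun n => corePsi q n) = EW q := by
        rw [corePsi_false q0f, leftC_pairC]
      have hCR : rightC (fun n => corePsi q n) = EW q := by
        rw [corePsi_false q0f, rightC_pairC]
      refine ⟨(some (Sum.inr v), some (Sum.inr v)), ?_, ?_⟩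
      · simp only [MFn.boxplus, MFn.sqcap, RepSp.prod, RepSp.hat]
        refine Part.mem_bind_iff.mpr ⟨some (Sum.inr v), ?_,
          (Part.mem_map_iff _).mpr ⟨some (Sum.inr v), ?_, rfl⟩⟩
        · rw [Part.mem_some_iff, hCL, EW]
          exact (hatSum_some_inr hv).symm
        · rw [Part.mem_some_iff, hCR, EW]
          exact (hatSum_some_inr hv).symm
      · simp only [MFn.boxplus, MFn.sqcap, Sum.elim_inr]
        refine Set.mem_prod.mpr ?_
        refine ⟨Set.mem_univ _, ?_⟩
        rw [if_pos hcond]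
        exact ⟨Sum.inr v, Or.inr ⟨v, hv2, rfl⟩, rfl⟩
    · rw [if_neg hq0, if_neg hq1] at hy'
      exact absurd hy' (Part.notMem_none _)

end

end StrongWeihrauch
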